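/- arXiv:1811.06963 — 5 statements merged into one kernel-verified Lean document; each statement's English description precedes it below -/
import Mathlib

section
/- Let p(ω) = a₀∏_{i=1}^N(ω - βᵢ) and q(ω) = a₀'∏_{i=1}^N(ω - βᵢ') be polynomials with all βᵢ, βᵢ' nonzero and a₀, a₀' ≠ 0. If |p(ω)|² = |q(ω)|² for all ω on the unit circle, then |a₀|²∏conj(βᵢ) = |a₀'|²∏conj(βᵢ') and the multisets {β₁, conj(β₁)⁻¹, …, β_N, conj(β_N)⁻¹} and {β₁', conj(β₁')⁻¹, …, β_N', conj(β_N')⁻¹} are equal. -/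
open ComplexConjugate Polynomial

lemma circle_infinite : {ω : ℂ | ‖ω‖ = 1}.Infinite := by
  have hne : ∀ t : ℝ, (1 - (t:ℂ)*Complex.I) ≠ 0 := by
    intro t h
    have := congrArg Complex.re h
    simp at this
  have hinj : Function.Injective (fun t : ℝ => ((1 + t*Complex.I)/(1 - t*Complex.I) : ℂ)) := by
    intro s t hst
    simp only at hst
    rw [div_eq_div_iff (hne s) (hne t)] at hst
    have : (s:ℂ) = t := by
      have h2 : 2*(s:ℂ)*Complex.I = 2*(t:ℂ)*Complex.I := by ring_nf at hst ⊢; linear_combination hst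
      have := mul_right_cancel₀ Complex.I_ne_zero h2
      linear_combination this/2
    exact_mod_cast this
  apply Set.infinite_of_injective_forall_mem hinj
  intro t
  simp only [Set.mem_setOf_eq, norm_div]
  rw [div_eq_one_iff_eq (by simp only [norm_ne_zero_iff]; exact hne t)]
  have : (starRingEnd ℂ) (1 + t*Complex.I) = 1 - t*Complex.I := by
    simp [map_add, map_mul, Complex.conj_I, Complex.conj_ofReal]; ring
  rw [← this, RCLike.norm_conj]

lemma side_eval (N : ℕ) (a₀ : ℂ) (β : Fin N → ℂ) (hβ : ∀ i, β i ≠ 0) (ω : ℂ) (hω : ‖ω‖ = 1) :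
    (a₀ * conj a₀ * ∏ i, (-conj (β i))) *
      (((Multiset.map β Finset.univ.val + Multiset.map (fun i => (conj (β i))⁻¹) Finset.univ.val).map
        (fun b => ω - b)).prod) =
    ((‖a₀ * ∏ i, (ω - β i)‖ : ℝ) : ℂ) ^ 2 * ω ^ N := by
  have hωω : ω * conj ω = 1 := by
    rw [Complex.mul_conj]
    simp [Complex.normSq_eq_norm_sq, hω]
  have hsq : ((‖a₀ * ∏ i, (ω - β i)‖ : ℝ) : ℂ)^2
      = (a₀ * ∏ i, (ω - β i)) * conj (a₀ * ∏ i, (ω - β i)) := by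
    rw [← Complex.ofReal_pow, Complex.sq_norm, Complex.mul_conj]
  have e1 : ((Multiset.map β Finset.univ.val).map (fun b => ω - b)).prod = ∏ i, (ω - β i) := by
    rw [Multiset.map_map]; rfl
  have e2 : ((Multiset.map (fun i => (conj (β i))⁻¹) Finset.univ.val).map (fun b => ω - b)).prod
      = ∏ i, (ω - (conj (β i))⁻¹) := by
    rw [Multiset.map_map]; rfl
  have key : (∏ i, (-conj (β i))) * (∏ i, (ω - (conj (β i))⁻¹)) = (∏ i, conj (ω - β i)) * ω^N := by
    calc (∏ i, (-conj (β i))) * (∏ i, (ω - (conj (β i))⁻¹))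
        = ∏ i, (-conj (β i) * (ω - (conj (β i))⁻¹)) := by rw [Finset.prod_mul_distrib]
      _ = ∏ i, (conj (ω - β i) * ω) := by
          refine Finset.prod_congr rfl fun i _ => ?_
          have hb : conj (β i) ≠ 0 := by simpa using hβ i
          have h1 : (conj (β i)) * (conj (β i))⁻¹ = 1 := mul_inv_cancel₀ hb
          rw [map_sub]
          linear_combination h1 - hωω
      _ = (∏ i, conj (ω - β i)) * ω^N := by
          rw [Finset.prod_mul_distrib, Finset.prod_const, Finset.card_univ, Fintype.card_fin]
  rw [hsq, Multiset.map_add, Multiset.prod_add, e1, e2, map_mul, map_prod]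
  linear_combination (a₀ * conj a₀ * ∏ i, (ω - β i)) * key

/-- If two degree-`N` polynomials with nonzero roots and nonzero leading coefficients
have the same intensity `|p(ω)|²` on the unit circle, then their normalizing constants
`|a₀|² ∏ conj(βᵢ)` agree and the multisets `{βᵢ, conj(βᵢ)⁻¹}` agree. -/
theorem equal_intensity_root_multisets (N : ℕ) (a₀ a₀' : ℂ)
    (ha : a₀ ≠ 0) (ha' : a₀' ≠ 0) (β β' : Fin N → ℂ)
    (hβ : ∀ i, β i ≠ 0) (hβ' : ∀ i, β' i ≠ 0)
    (h : ∀ ω : ℂ, ‖ω‖ = 1 →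
      ‖a₀ * ∏ i, (ω - β i)‖ ^ 2 =
        ‖a₀' * ∏ i, (ω - β' i)‖ ^ 2) :
    (((‖a₀‖ : ℝ) : ℂ) ^ 2) * ∏ i, conj (β i) =
        (((‖a₀'‖ : ℝ) : ℂ) ^ 2) * ∏ i, conj (β' i) ∧
      Multiset.map β Finset.univ.val +
          Multiset.map (fun i => (conj (β i))⁻¹) Finset.univ.val =
        Multiset.map β' Finset.univ.val +
          Multiset.map (fun i => (conj (β' i))⁻¹) Finset.univ.val := by
  have hconjne : ∀ (γ : Fin N → ℂ) (hγ : ∀ i, γ i ≠ 0) (i : Fin N), -conj (γ i) ≠ 0 := by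
    intro γ hγ i
    simpa using hγ i
  set S : Multiset ℂ := Multiset.map β Finset.univ.val +
      Multiset.map (fun i => (conj (β i))⁻¹) Finset.univ.val with hSdef
  set S' : Multiset ℂ := Multiset.map β' Finset.univ.val +
      Multiset.map (fun i => (conj (β' i))⁻¹) Finset.univ.val with hS'def
  have hk0 : a₀ * conj a₀ * ∏ i, (-conj (β i)) ≠ 0 :=
    mul_ne_zero (mul_ne_zero ha (by simpa using ha))
      (Finset.prod_ne_zero_iff.2 fun i _ => hconjne β hβ i)
  have hk'0 : a₀' * conj a₀' * ∏ i, (-conj (β' i)) ≠ 0 :=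
    mul_ne_zero (mul_ne_zero ha' (by simpa using ha'))
      (Finset.prod_ne_zero_iff.2 fun i _ => hconjne β' hβ' i)
  have em : ∀ (s : Multiset ℂ) (ω : ℂ),
      ((s.map fun b => (X : ℂ[X]) - C b).prod).eval ω = (s.map fun b => ω - b).prod := by
    intro s ω
    rw [Polynomial.eval_multiset_prod, Multiset.map_map]
    congr 1
    ext b
    simp [Function.comp]
  have hFG : C (a₀ * conj a₀ * ∏ i, (-conj (β i))) * (S.map fun b => (X : ℂ[X]) - C b).prod
      = C (a₀' * conj a₀' * ∏ i, (-conj (β' i))) * (S'.map fun b => (X : ℂ[X]) - C b).prod := by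
    rw [← sub_eq_zero]
    apply Polynomial.eq_zero_of_infinite_isRoot
    apply circle_infinite.mono
    intro ω hω
    simp only [Set.mem_setOf_eq] at hω ⊢
    have hcast : ((‖a₀ * ∏ i, (ω - β i)‖ : ℝ) : ℂ) ^ 2
        = ((‖a₀' * ∏ i, (ω - β' i)‖ : ℝ) : ℂ) ^ 2 := by
      exact_mod_cast congrArg (fun r : ℝ => (r : ℂ)) (h ω hω)
    have l1 := side_eval N a₀ β hβ ω hω
    have l2 := side_eval N a₀' β' hβ' ω hω
    simp only [IsRoot, eval_sub, eval_mul, eval_C, em]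
    rw [l1, l2, hcast, sub_self]
  have hroots : S = S' := by
    have := congrArg Polynomial.roots hFG
    rwa [Polynomial.roots_C_mul _ hk0, Polynomial.roots_C_mul _ hk'0,
      Polynomial.roots_multiset_prod_X_sub_C, Polynomial.roots_multiset_prod_X_sub_C] at this
  refine ⟨?_, hroots⟩
  have hMne : (S'.map fun b => (X : ℂ[X]) - C b).prod ≠ 0 :=
    (monic_multiset_prod_of_monic _ _ fun b _ => monic_X_sub_C b).ne_zero
  rw [hroots] at hFG
  have hkk : a₀ * conj a₀ * ∏ i, (-conj (β i)) = a₀' * conj a₀' * ∏ i, (-conj (β' i)) :=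
    Polynomial.C_injective (mul_right_cancel₀ hMne hFG)
  have eneg : ∀ γ : Fin N → ℂ, (∏ i, (-conj (γ i))) = (-1 : ℂ)^N * ∏ i, conj (γ i) := by
    intro γ
    calc (∏ i, (-conj (γ i))) = ∏ i, ((-1 : ℂ) * conj (γ i)) :=
          Finset.prod_congr rfl fun i _ => by ring
      _ = (-1 : ℂ)^N * ∏ i, conj (γ i) := by
          rw [Finset.prod_mul_distrib, Finset.prod_const, Finset.card_univ, Fintype.card_fin]
  have habs : ∀ z : ℂ, z * conj z = ((‖z‖ : ℝ) : ℂ)^2 := fun z => by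
    rw [Complex.mul_conj, ← Complex.ofReal_pow, Complex.sq_norm]
  rw [eneg β, eneg β', habs a₀, habs a₀'] at hkk
  have h1 : (-1 : ℂ)^N * (((‖a₀‖ : ℝ) : ℂ)^2 * ∏ i, conj (β i))
      = (-1 : ℂ)^N * (((‖a₀'‖ : ℝ) : ℂ)^2 * ∏ i, conj (β' i)) := by
    linear_combination hkk
  exact mul_left_cancel₀ (pow_ne_zero N (by norm_num)) h1
end

section
/- Let x₁ ∈ ℂ^{k+1} and x₂ ∈ ℂ^{N-k+1}, and define the convolution (x₁ ⋆ x₂)[n] = ∑_ℓ x₁[ℓ]·conj(x₂[n-ℓ]) as a vector in ℂ^{N+1}. Then x = x₁ ⋆ x₂ and x' = x₁ ⋆ ẋ₂ (where ẋ₂ is the conjugate-reflection of x₂) have the same Fourier intensity function: |x̂(ω)|² = |x̂'(ω)|² for all ω on the unit circle. -/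
open ComplexConjugate

/-- The (conjugate) convolution `(u ⋆ v)[n] = ∑_ℓ u[ℓ] conj(v[n-ℓ])` of signals
indexed by `ℕ` (extended by zero). -/
noncomputable def conv (u v : ℕ → ℂ) (n : ℕ) : ℂ :=
  ∑ ℓ ∈ Finset.range (n + 1), u ℓ * conj (v (n - ℓ))

/-- The conjugate-reflection of a signal supported in `[0, m]`:
`v̇[n] = conj (v[m-n])` for `n ≤ m`, zero otherwise. -/
noncomputable def conjReflect (m : ℕ) (v : ℕ → ℂ) (n : ℕ) : ℂ :=
  if n ≤ m then conj (v (m - n)) else 0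

/-- The Fourier transform `∑_{n=0}^N v[n] ω^n` of a signal supported in `[0, N]`. -/
noncomputable def fourierSig (N : ℕ) (v : ℕ → ℂ) (ω : ℂ) : ℂ :=
  ∑ n ∈ Finset.range (N + 1), v n * ω ^ n

lemma fourier_conv (K M : ℕ) (u v : ℕ → ℂ) (hu : ∀ i, K < i → u i = 0)
    (hv : ∀ i, M < i → v i = 0) (ω : ℂ) :
    fourierSig (K + M) (conv u v) ω =
      (∑ ℓ ∈ Finset.range (K + 1), u ℓ * ω ^ ℓ) *
      (∑ m ∈ Finset.range (M + 1), conj (v m) * ω ^ m) := by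
  classical
  set N := K + M with hN
  set F : ℕ × ℕ → ℂ := fun p => u p.1 * ω ^ p.1 * (conj (v p.2) * ω ^ p.2) with hF
  have step1 : fourierSig N (conv u v) ω =
      ∑ p ∈ (Finset.range (N + 1) ×ˢ Finset.range (N + 1)).filter
        (fun p => p.1 + p.2 ≤ N), F p := by
    unfold fourierSig conv
    have : ∀ n ∈ Finset.range (N + 1),
        (∑ ℓ ∈ Finset.range (n + 1), u ℓ * conj (v (n - ℓ))) * ω ^ n =
        ∑ ℓ ∈ Finset.range (n + 1), F (ℓ, n - ℓ) := by
      intro n _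
      rw [Finset.sum_mul]
      refine Finset.sum_congr rfl fun ℓ hℓ => ?_
      have hℓn : ℓ ≤ n := Nat.lt_succ_iff.mp (Finset.mem_range.mp hℓ)
      have : ω ^ ℓ * ω ^ (n - ℓ) = ω ^ n := by
        rw [← pow_add, Nat.add_sub_cancel' hℓn]
      simp only [hF]
      rw [← this]; ring
    rw [Finset.sum_congr rfl this, Finset.sum_sigma']
    refine Finset.sum_nbij' (fun i => (i.2, i.1 - i.2)) (fun p => ⟨p.1 + p.2, p.1⟩)
      ?_ ?_ ?_ ?_ ?_
    · rintro ⟨n, ℓ⟩ hi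
      simp only [Finset.mem_sigma, Finset.mem_range, Nat.lt_succ_iff] at hi
      simp only [Finset.mem_filter, Finset.mem_product, Finset.mem_range, Nat.lt_succ_iff]
      obtain ⟨hn, hℓ⟩ := hi
      exact ⟨⟨le_trans hℓ hn, le_trans (Nat.sub_le _ _) hn⟩, by omega⟩
    · rintro ⟨a, b⟩ hp
      simp only [Finset.mem_filter, Finset.mem_product, Finset.mem_range, Nat.lt_succ_iff] at hp
      simp only [Finset.mem_sigma, Finset.mem_range, Nat.lt_succ_iff]
      exact ⟨hp.2, Nat.le_add_right _ _⟩
    · rintro ⟨n, ℓ⟩ hi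
      simp only [Finset.mem_sigma, Finset.mem_range, Nat.lt_succ_iff] at hi
      have : ℓ + (n - ℓ) = n := Nat.add_sub_cancel' hi.2
      simp [this]
    · rintro ⟨a, b⟩ _
      simp
    · rintro ⟨n, ℓ⟩ _
      rfl
  have step2 : ∑ p ∈ (Finset.range (N + 1) ×ˢ Finset.range (N + 1)).filter
        (fun p => p.1 + p.2 ≤ N), F p =
      ∑ p ∈ Finset.range (K + 1) ×ˢ Finset.range (M + 1), F p := by
    symm
    refine Finset.sum_subset ?_ ?_
    · rintro ⟨a, b⟩ hp
      simp only [Finset.mem_product, Finset.mem_range, Nat.lt_succ_iff] at hp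
      simp only [Finset.mem_filter, Finset.mem_product, Finset.mem_range, Nat.lt_succ_iff]
      exact ⟨⟨by omega, by omega⟩, by omega⟩
    · rintro ⟨a, b⟩ _ hp
      simp only [Finset.mem_product, Finset.mem_range, Nat.lt_succ_iff, not_and_or, not_le] at hp
      rcases hp with h | h
      · simp [hF, hu a h]
      · simp [hF, hv b h]
  rw [step1, step2, Finset.sum_product, Finset.sum_mul_sum]

lemma reflect_factor (M : ℕ) (v : ℕ → ℂ) (ω : ℂ) (hω : ‖ω‖ = 1) :
    ∑ m ∈ Finset.range (M + 1), conj ((conjReflect M v) m) * ω ^ m =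
      ω ^ M * conj (∑ m ∈ Finset.range (M + 1), conj (v m) * ω ^ m) := by
  have hnormSq : (Complex.normSq ω : ℂ) = 1 := by
    rw [Complex.normSq_eq_norm_sq, hω]; norm_num
  have lhs_eq : ∑ m ∈ Finset.range (M + 1), conj ((conjReflect M v) m) * ω ^ m =
      ∑ m ∈ Finset.range (M + 1), v (M - m) * ω ^ m := by
    refine Finset.sum_congr rfl fun m hm => ?_
    have hmM : m ≤ M := Nat.lt_succ_iff.mp (Finset.mem_range.mp hm)
    simp [conjReflect, hmM]
  rw [lhs_eq]
  have := Finset.sum_range_reflect (fun j => v (M - j) * ω ^ j) (M + 1)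
  simp only [Nat.add_sub_cancel] at this
  rw [← this]
  rw [map_sum, Finset.mul_sum]
  refine Finset.sum_congr rfl fun j hj => ?_
  have hjM : j ≤ M := Nat.lt_succ_iff.mp (Finset.mem_range.mp hj)
  have h1 : M - (M - j) = j := by omega
  rw [h1]
  have h2 : ω ^ M = ω ^ (M - j) * ω ^ j := by rw [← pow_add, Nat.sub_add_cancel hjM]
  rw [map_mul, map_pow, Complex.conj_conj, h2]
  have h3 : ω ^ j * (starRingEnd ℂ ω) ^ j = 1 := by
    rw [← mul_pow, Complex.mul_conj, hnormSq, one_pow]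
  calc v j * ω ^ (M - j) = v j * ω ^ (M - j) * 1 := by ring
    _ = ω ^ (M - j) * ω ^ j * (v j * (starRingEnd ℂ ω) ^ j) := by
        rw [← h3]; ring

/-- For `x₁ ∈ ℂ^{k+1}` and `x₂ ∈ ℂ^{N-k+1}`, the signals `x₁ ⋆ x₂` and
`x₁ ⋆ ẋ₂` have the same Fourier intensity function on the unit circle. -/
theorem conv_conjReflect_same_intensity (N k : ℕ) (hk : k ≤ N) (x₁ x₂ : ℕ → ℂ)
    (h1 : ∀ i, k < i → x₁ i = 0) (h2 : ∀ i, N - k < i → x₂ i = 0) :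
    ∀ ω : ℂ, ‖ω‖ = 1 →
      ‖fourierSig N (conv x₁ x₂) ω‖ ^ 2 =
        ‖fourierSig N (conv x₁ (conjReflect (N - k) x₂)) ω‖ ^ 2 := by
  intro ω hω
  set M := N - k with hM
  have hKM : k + M = N := Nat.add_sub_cancel' hk
  have h2' : ∀ i, M < i → conjReflect M x₂ i = 0 := by
    intro i hi
    simp [conjReflect, not_le.mpr hi]
  have e1 : fourierSig N (conv x₁ x₂) ω =
      (∑ ℓ ∈ Finset.range (k + 1), x₁ ℓ * ω ^ ℓ) *
      (∑ m ∈ Finset.range (M + 1), conj (x₂ m) * ω ^ m) := by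
    rw [← hKM]; exact fourier_conv k M x₁ x₂ h1 h2 ω
  have e2 : fourierSig N (conv x₁ (conjReflect M x₂)) ω =
      (∑ ℓ ∈ Finset.range (k + 1), x₁ ℓ * ω ^ ℓ) *
      (ω ^ M * conj (∑ m ∈ Finset.range (M + 1), conj (x₂ m) * ω ^ m)) := by
    rw [← hKM, fourier_conv k M x₁ (conjReflect M x₂) h1 h2' ω,
      reflect_factor M x₂ ω hω]
  have habsω : ‖ω‖ = 1 := by exact hω
  rw [e1, e2, norm_mul, norm_mul, norm_mul, norm_pow, habsω, one_pow, one_mul,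
    Complex.norm_conj]
end

section
/- For the vector x = (a',0,…,0,a) with a, a' > 0, a ≠ a', any x' ∈ ℂ^{N+1} with the same Fourier intensity function as x and with x'[N] = a satisfies x' = x exactly (not just up to phase). -/
open Complex Polynomial Finset

/-- For `x = (a', 0, …, 0, a)` with `a, a' > 0`, `a ≠ a'`: any `x'` with the same
Fourier intensity function and `x'[N] = a` equals `x` exactly. -/
theorem uniqueness_with_fixed_last_entry (N : ℕ) (hN : 0 < N) (a a' : ℝ)
    (ha : 0 < a) (ha' : 0 < a') (hne : a ≠ a') (x x' : Fin (N + 1) → ℂ)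
    (hx : x = fun n => if n = 0 then (a' : ℂ) else if n = Fin.last N then (a : ℂ) else 0)
    (hint : ∀ ω : ℂ, ‖ω‖ = 1 →
      ‖∑ n : Fin (N + 1), x' n * ω ^ (n : ℕ)‖ ^ 2 =
        ‖∑ n : Fin (N + 1), x n * ω ^ (n : ℕ)‖ ^ 2)
    (hlast : x' (Fin.last N) = (a : ℂ)) :
    x' = x := by
  have hlast0 : (Fin.last N) ≠ (0 : Fin (N + 1)) := by
    simp only [ne_eq, Fin.ext_iff, Fin.val_last, Fin.val_zero]
    omega
  set c : Fin (N+1) → Fin (N+1) → ℂ :=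
    fun n m => x' n * (starRingEnd ℂ) (x' m) - x n * (starRingEnd ℂ) (x m) with hc
  set P : Polynomial ℂ :=
    ∑ n : Fin (N+1), ∑ m : Fin (N+1), Polynomial.C (c n m) * Polynomial.X ^ (N + (n:ℕ) - (m:ℕ))
    with hP
  -- key evaluation identity
  have key : ∀ (ω : ℂ), ‖ω‖ = 1 → ∀ (y : Fin (N+1) → ℂ),
      (∑ n : Fin (N+1), ∑ m : Fin (N+1),
          y n * (starRingEnd ℂ) (y m) * ω ^ (N + (n:ℕ) - (m:ℕ)))
        = (Complex.normSq (∑ n : Fin (N+1), y n * ω ^ (n:ℕ)) : ℂ) * ω ^ N := by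
    intro ω hω y
    have hω1 : ω * (starRingEnd ℂ) ω = 1 := by
      rw [Complex.mul_conj]
      norm_cast
      rw [Complex.normSq_eq_norm_sq]
      simp [hω]
    have : (Complex.normSq (∑ n : Fin (N+1), y n * ω ^ (n:ℕ)) : ℂ)
        = (∑ n : Fin (N+1), y n * ω ^ (n:ℕ)) *
          (starRingEnd ℂ) (∑ m : Fin (N+1), y m * ω ^ (m:ℕ)) := by
      rw [Complex.mul_conj]
    rw [this, map_sum, Finset.sum_mul_sum, Finset.sum_mul]
    refine Finset.sum_congr rfl fun n _ => ?_
    rw [Finset.sum_mul]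
    refine Finset.sum_congr rfl fun m _ => ?_
    have hm : (m : ℕ) ≤ N := Fin.is_le m
    have hpow : ω ^ (N + (n:ℕ) - (m:ℕ)) = ω ^ (n:ℕ) * ((starRingEnd ℂ) ω) ^ (m:ℕ) * ω ^ N := by
      have h1 : (N + (n:ℕ) - (m:ℕ)) + (m:ℕ) = (n:ℕ) + N := by omega
      have : ω ^ ((N + (n:ℕ) - (m:ℕ)) + (m:ℕ)) = ω ^ ((n:ℕ) + N) := by rw [h1]
      rw [pow_add, pow_add] at this
      calc ω ^ (N + (n:ℕ) - (m:ℕ))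
          = ω ^ (N + (n:ℕ) - (m:ℕ)) * (ω * (starRingEnd ℂ) ω) ^ (m:ℕ) := by
            rw [hω1, one_pow, mul_one]
        _ = (ω ^ (N + (n:ℕ) - (m:ℕ)) * ω ^ (m:ℕ)) * ((starRingEnd ℂ) ω) ^ (m:ℕ) := by
            rw [mul_pow]; ring
        _ = (ω ^ (n:ℕ) * ω ^ N) * ((starRingEnd ℂ) ω) ^ (m:ℕ) := by rw [this]
        _ = ω ^ (n:ℕ) * ((starRingEnd ℂ) ω) ^ (m:ℕ) * ω ^ N := by ring
    rw [hpow, map_mul, map_pow]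
    ring
  have heval : ∀ ω : ℂ, ‖ω‖ = 1 → P.eval ω = 0 := by
    intro ω hω
    have : P.eval ω = (∑ n : Fin (N+1), ∑ m : Fin (N+1),
        c n m * ω ^ (N + (n:ℕ) - (m:ℕ))) := by
      simp [hP, Polynomial.eval_finset_sum]
    rw [this]
    have split : (∑ n : Fin (N+1), ∑ m : Fin (N+1), c n m * ω ^ (N + (n:ℕ) - (m:ℕ)))
        = (∑ n : Fin (N+1), ∑ m : Fin (N+1),
            x' n * (starRingEnd ℂ) (x' m) * ω ^ (N + (n:ℕ) - (m:ℕ)))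
          - (∑ n : Fin (N+1), ∑ m : Fin (N+1),
            x n * (starRingEnd ℂ) (x m) * ω ^ (N + (n:ℕ) - (m:ℕ))) := by
      rw [← Finset.sum_sub_distrib]
      refine Finset.sum_congr rfl fun n _ => ?_
      rw [← Finset.sum_sub_distrib]
      refine Finset.sum_congr rfl fun m _ => ?_
      simp [hc]; ring
    rw [split, key ω hω x', key ω hω x]
    have h2 : Complex.normSq (∑ n : Fin (N+1), x' n * ω ^ (n:ℕ))
        = Complex.normSq (∑ n : Fin (N+1), x n * ω ^ (n:ℕ)) := by
      rw [Complex.normSq_eq_norm_sq, Complex.normSq_eq_norm_sq]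
      exact hint ω hω
    rw [h2]; ring
  -- P has infinitely many roots
  have hPzero : P = 0 := by
    apply Polynomial.eq_zero_of_infinite_isRoot
    have hinj : Set.InjOn (fun t : ℝ => Complex.exp (t * Complex.I)) (Set.Ioo 0 1) := by
      intro s hs t ht h
      simp only at h
      rw [Complex.exp_eq_exp_iff_exists_int] at h
      obtain ⟨k, hk⟩ := h
      have him := congrArg Complex.im hk
      simp at him
      have hpi := Real.pi_gt_three
      rcases hs with ⟨hs0, hs1⟩; rcases ht with ⟨ht0, ht1⟩
      have hk0 : k = 0 := by
        rcases lt_trichotomy k 0 with h | h | h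
        · exfalso
          have hk1 : (k:ℝ) ≤ -1 := by exact_mod_cast Int.le_sub_one_iff.mpr h
          nlinarith
        · exact h
        · exfalso
          have hk1 : (1:ℝ) ≤ (k:ℝ) := by exact_mod_cast h
          nlinarith
      rw [hk0] at him; simp at him; linarith [him]
    have hsub : (fun t : ℝ => Complex.exp (t * Complex.I)) '' (Set.Ioo 0 1) ⊆
        {z : ℂ | P.IsRoot z} := by
      rintro z ⟨t, _, rfl⟩
      have : ‖Complex.exp (t * Complex.I)‖ = 1 := by
        rw [Complex.norm_exp]
        simp
      exact heval _ this
    exact ((Set.Ioo_infinite (by norm_num : (0:ℝ) < 1)).image hinj).mono hsub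
  -- extract coefficients
  have hcoeff : ∀ k, (∑ n : Fin (N+1), ∑ m : Fin (N+1),
      if k = N + (n:ℕ) - (m:ℕ) then c n m else 0) = 0 := by
    intro k
    have h := congrArg (fun p => Polynomial.coeff p k) hPzero
    simp only [hP, Polynomial.finset_sum_coeff, Polynomial.coeff_C_mul,
      Polynomial.coeff_X_pow, Polynomial.coeff_zero, mul_ite, mul_one, mul_zero] at h
    exact h
  -- coefficient at 2N : c (last N) 0 = 0
  have hsingle : (∑ n : Fin (N+1), ∑ m : Fin (N+1),
      if 2*N = N + (n:ℕ) - (m:ℕ) then c n m else 0) = c (Fin.last N) 0 := by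
    rw [Finset.sum_eq_single_of_mem (Fin.last N) (Finset.mem_univ _)]
    · rw [Finset.sum_eq_single_of_mem (0 : Fin (N+1)) (Finset.mem_univ _)]
      · rw [if_pos (by simp [Fin.val_last]; omega)]
      · intro m _ hm
        have h1 : (m:ℕ) ≠ 0 := fun h => hm (Fin.ext h)
        have h2 : (m:ℕ) ≤ N := Fin.is_le m
        rw [if_neg (by simp [Fin.val_last]; omega)]
    · intro n _ hn
      apply Finset.sum_eq_zero
      intro m _
      have h1 : (n:ℕ) ≤ N := Fin.is_le n
      have h2 : (n:ℕ) ≠ N := fun h => hn (Fin.ext (by simp [Fin.val_last, h]))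
      rw [if_neg (by omega)]
  have hx0 : x' 0 = (a' : ℂ) := by
    have h0 : c (Fin.last N) 0 = 0 := by rw [← hsingle]; exact hcoeff (2*N)
    simp only [hc] at h0
    rw [hlast, hx] at h0
    simp only [if_pos rfl, if_neg hlast0, if_neg (Ne.symm hlast0), if_true,
      Complex.conj_ofReal, sub_eq_zero] at h0
    have ha0 : (a:ℂ) ≠ 0 := by exact_mod_cast ha.ne'
    have hconj : (starRingEnd ℂ) (x' 0) = (a':ℂ) := mul_left_cancel₀ ha0 h0
    have := congrArg (starRingEnd ℂ) hconj
    simpa using this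
  -- coefficient at N : diagonal sum
  have hdiag : (∑ n : Fin (N+1), ∑ m : Fin (N+1),
      if N = N + (n:ℕ) - (m:ℕ) then c n m else 0) = ∑ n : Fin (N+1), c n n := by
    refine Finset.sum_congr rfl fun n _ => ?_
    rw [Finset.sum_eq_single_of_mem n (Finset.mem_univ _)]
    · rw [if_pos (by omega)]
    · intro m _ hm
      have h1 : (m:ℕ) ≠ (n:ℕ) := fun h => hm (Fin.ext h)
      have h2 : (m:ℕ) ≤ N := Fin.is_le m
      rw [if_neg (by omega)]
  have hsumc : ∑ n : Fin (N+1), c n n = 0 := by rw [← hdiag]; exact hcoeff N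
  have hns : (∑ n : Fin (N+1), Complex.normSq (x' n)) = ∑ n : Fin (N+1), Complex.normSq (x n) := by
    have h1 : (∑ n : Fin (N+1), ((Complex.normSq (x' n) : ℂ) - (Complex.normSq (x n) : ℂ))) = 0 := by
      rw [← hsumc]
      refine Finset.sum_congr rfl fun n _ => ?_
      simp [hc, Complex.mul_conj]
    rw [Finset.sum_sub_distrib, sub_eq_zero] at h1
    exact_mod_cast h1
  have hxsum : ∑ n : Fin (N+1), Complex.normSq (x n) = a'^2 + a^2 := by
    rw [hx]
    have hpt : ∀ n : Fin (N+1),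
        Complex.normSq (if n = 0 then (a':ℂ) else if n = Fin.last N then (a:ℂ) else 0)
          = (if n = 0 then a'^2 else 0) + (if n = Fin.last N then a^2 else 0) := by
      intro n
      by_cases h0 : n = 0
      · simp [h0, Ne.symm hlast0, Complex.normSq_ofReal, sq]
      · by_cases hl : n = Fin.last N
        · simp [hl, hlast0, Complex.normSq_ofReal, sq]
        · simp [h0, hl]
    simp only [hpt, Finset.sum_add_distrib, Finset.sum_ite_eq', Finset.mem_univ, if_pos]
  have hz : ∀ n : Fin (N+1), n ≠ 0 → n ≠ Fin.last N → x' n = 0 := by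
    have hsplit := Finset.sum_sdiff (f := fun n => Complex.normSq (x' n))
      (Finset.subset_univ ({0, Fin.last N} : Finset (Fin (N+1))))
    have hpair : ∑ n ∈ ({0, Fin.last N} : Finset (Fin (N+1))), Complex.normSq (x' n)
        = a'^2 + a^2 := by
      rw [Finset.sum_pair (Ne.symm hlast0), hx0, hlast]
      simp [Complex.normSq_ofReal, sq]
    have hrest : ∑ n ∈ Finset.univ \ ({0, Fin.last N} : Finset (Fin (N+1))),
        Complex.normSq (x' n) = 0 := by
      rw [hpair, hns, hxsum] at hsplit
      linarith
    intro n hn0 hnl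
    have hmem : n ∈ Finset.univ \ ({0, Fin.last N} : Finset (Fin (N+1))) := by
      simp [hn0, hnl]
    have := (Finset.sum_eq_zero_iff_of_nonneg
      (fun i _ => Complex.normSq_nonneg _)).mp hrest n hmem
    exact Complex.normSq_eq_zero.mp this
  funext n
  rw [hx]
  by_cases h0 : n = 0
  · simpa [h0] using hx0
  · by_cases hl : n = Fin.last N
    · simp only [hl, if_neg hlast0, if_pos rfl]
      exact hlast
    · simp only [if_neg h0, if_neg hl]
      exact hz n h0 hl
end

section
/- Let x, x' ∈ ℂ^{N+1} have full support. Then |x̂(ω)|² = |x̂'(ω)|² for all ω on the unit circle if and only if there exist k ∈ {0,…,N}, vectors x₁ ∈ ℂ^{k+1}, x₂ ∈ ℂ^{N-k+1}, and λ ∈ S¹ such that x = x₁ ⋆ x₂ and x' = λ·(x₁ ⋆ ẋ₂), where ⋆ denotes the convolution (u ⋆ v)[n] = ∑_ℓ u[ℓ]·conj(v[n-ℓ]) and ẋ₂ is the conjugate-reflection of x₂. -/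
open ComplexConjugate

namespace BPaux

open Polynomial

/-! ### Polynomials attached to signals -/

noncomputable def toPoly (K : ℕ) (v : ℕ → ℂ) : ℂ[X] :=
  ∑ n ∈ Finset.range (K + 1), C (v n) * X ^ n

lemma coeff_toPoly (K : ℕ) (v : ℕ → ℂ) (n : ℕ) :
    (toPoly K v).coeff n = if n ≤ K then v n else 0 := by
  rw [toPoly, finset_sum_coeff]
  simp only [coeff_C_mul, coeff_X_pow, mul_ite, mul_one, mul_zero,
    Finset.sum_ite_eq, Finset.mem_range, Nat.lt_succ_iff]

lemma coeff_toPoly_of_supp (K : ℕ) (v : ℕ → ℂ) (hv : ∀ i, K < i → v i = 0) (n : ℕ) :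
    (toPoly K v).coeff n = v n := by
  rw [coeff_toPoly]; split
  · rfl
  · exact (hv n (by omega)).symm

lemma natDegree_toPoly_le (K : ℕ) (v : ℕ → ℂ) : (toPoly K v).natDegree ≤ K := by
  apply natDegree_le_iff_coeff_eq_zero.mpr
  intro n hn
  rw [coeff_toPoly, if_neg (by omega)]

lemma toPoly_coeff_self (K : ℕ) (p : ℂ[X]) (h : p.natDegree ≤ K) :
    toPoly K p.coeff = p := by
  ext n
  rw [coeff_toPoly]
  split
  · rfl
  · exact (coeff_eq_zero_of_natDegree_lt (by omega)).symm

lemma eval_toPoly (K : ℕ) (v : ℕ → ℂ) (ω : ℂ) :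
    (toPoly K v).eval ω = fourierSig K v ω := by
  rw [toPoly, fourierSig, eval_finset_sum]
  simp

/-! ### The conjugate-reflection (dagger) of a polynomial -/

noncomputable def dagg (m : ℕ) (p : ℂ[X]) : ℂ[X] :=
  reflect m (p.map (starRingEnd ℂ))

lemma coeff_dagg (m : ℕ) (p : ℂ[X]) (n : ℕ) :
    (dagg m p).coeff n = conj (p.coeff (revAt m n)) := by
  rw [dagg, coeff_reflect, coeff_map]

lemma dagg_mul {F G : ℕ} {f g : ℂ[X]} (hf : f.natDegree ≤ F) (hg : g.natDegree ≤ G) :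
    dagg (F + G) (f * g) = dagg F f * dagg G g := by
  rw [dagg, dagg, dagg, Polynomial.map_mul]
  exact reflect_mul _ _ (natDegree_map_le.trans hf) (natDegree_map_le.trans hg)

lemma dagg_C_mul (m : ℕ) (a : ℂ) (p : ℂ[X]) :
    dagg m (Polynomial.C a * p) = Polynomial.C (conj a) * dagg m p := by
  rw [dagg, Polynomial.map_mul, map_C, reflect_C_mul, dagg]

lemma dagg_C (m : ℕ) (a : ℂ) : dagg m (Polynomial.C a) = Polynomial.C (conj a) * X ^ m := by
  rw [dagg, map_C, reflect_C]

lemma dagg_one : dagg 0 (1 : ℂ[X]) = 1 := by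
  have h := dagg_C 0 (1 : ℂ)
  simpa using h

lemma conj_eq_inv {ω : ℂ} (hω : ‖ω‖ = 1) : conj ω = ω⁻¹ := by
  have h1 : ω * conj ω = 1 := by
    rw [Complex.mul_conj]
    norm_cast
    rw [← Complex.sq_norm ω]
    simp [Complex.norm_def] at hω ⊢
    simp [hω]
  field_simp [show ω ≠ 0 by rintro rfl; simp at hω]
  linear_combination h1

lemma natDegree_dagg_le (m : ℕ) (p : ℂ[X]) (h : p.natDegree ≤ m) :
    (dagg m p).natDegree ≤ m := by
  apply natDegree_le_iff_coeff_eq_zero.mpr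
  intro n hn
  rw [coeff_dagg, revAt_eq_self_of_lt hn,
    coeff_eq_zero_of_natDegree_lt (by omega), map_zero]

lemma eval_dagg {m : ℕ} {p : ℂ[X]} (h : p.natDegree ≤ m) {ω : ℂ} (hω : ‖ω‖ = 1) :
    (dagg m p).eval ω = ω ^ m * conj (p.eval ω) := by
  have hω0 : ω ≠ 0 := by rintro rfl; simp at hω
  have hd : dagg m p
      = ∑ n ∈ Finset.range (m + 1), Polynomial.C (conj (p.coeff (m - n))) * X ^ n := by
    ext n
    rw [coeff_dagg, finset_sum_coeff]
    simp only [coeff_C_mul, coeff_X_pow, mul_ite, mul_one, mul_zero,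
      Finset.sum_ite_eq, Finset.mem_range, Nat.lt_succ_iff]
    by_cases hn : n ≤ m
    · rw [if_pos hn, revAt_le hn]
    · rw [if_neg hn, revAt_eq_self_of_lt (by omega)]
      rw [coeff_eq_zero_of_natDegree_lt (by omega), map_zero]
  rw [hd, eval_finset_sum]
  simp only [eval_mul, eval_C, eval_pow, eval_X]
  rw [eval_eq_sum_range' (Nat.lt_succ_of_le h), map_sum]
  rw [Finset.mul_sum]
  rw [← Finset.sum_range_reflect]
  apply Finset.sum_congr rfl
  intro j hj
  simp only [Finset.mem_range, Nat.lt_succ_iff] at hj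
  have h1 : m + 1 - 1 - j = m - j := by omega
  rw [h1]
  have h2 : m - (m - j) = j := by omega
  rw [h2, map_mul, map_pow, conj_eq_inv hω]
  have h3 : ω ^ m * (conj (p.coeff j) * (ω⁻¹) ^ j)
      = conj (p.coeff j) * (ω ^ m * (ω⁻¹) ^ j) := by ring
  rw [h3]
  congr 1
  rw [pow_sub₀ _ hω0 hj, ← inv_pow]

lemma dagg_lin {α : ℂ} (hα : α ≠ 0) :
    dagg 1 (X - Polynomial.C α) = Polynomial.C (-conj α) * (X - Polynomial.C ((conj α)⁻¹)) := by
  have hcα : conj α ≠ 0 := by simpa using hα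
  have h1 : dagg 1 (X - Polynomial.C α) = 1 - Polynomial.C (conj α) * X := by
    rw [dagg, Polynomial.map_sub, map_X, map_C]
    rw [sub_eq_add_neg, ← map_neg Polynomial.C, reflect_add, reflect_C]
    have hX : (X : ℂ[X]) = X ^ 1 := (pow_one _).symm
    rw [hX, reflect_monomial, revAt_le (le_refl 1), pow_zero, pow_one]
    ring_nf
    rw [map_neg]
    ring
  rw [h1]
  have h2 : Polynomial.C (-conj α) * Polynomial.C ((conj α)⁻¹) = Polynomial.C (-1 : ℂ) := by
    rw [← map_mul]
    congr 1
    field_simp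
  rw [mul_sub, h2]
  simp only [map_neg, map_one]
  ring

lemma natDegree_msetprod (A : Multiset ℂ) :
    ((A.map (fun α => X - Polynomial.C α)).prod).natDegree = Multiset.card A := by
  simpa using natDegree_multiset_prod_X_sub_C_eq_card A

lemma monic_msetprod (A : Multiset ℂ) :
    ((A.map (fun α => X - Polynomial.C α)).prod).Monic :=
  monic_multiset_prod_of_monic _ _ (fun a _ => monic_X_sub_C a)

/-! ### The root-inversion involution -/

noncomputable def iota (z : ℂ) : ℂ := (conj z)⁻¹

lemma iota_apply (z : ℂ) : iota z = (conj z)⁻¹ := rfl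

lemma iota_invol (z : ℂ) : iota (iota z) = z := by simp [iota]

lemma iota_inj : Function.Injective iota :=
  Function.LeftInverse.injective iota_invol

lemma count_map_iota (s : Multiset ℂ) (z : ℂ) :
    (s.map iota).count z = s.count (iota z) := by
  classical
  have h := Multiset.count_map_eq_count' iota s iota_inj (iota z)
  rwa [iota_invol] at h

lemma multiset_decomp (A B : Multiset ℂ)
    (h : A + A.map iota = B + B.map iota) :
    B = (A ∩ B) + (A - A ∩ B).map iota := by
  classical
  ext z
  have hz := congrArg (Multiset.count z) h
  have hiz := congrArg (Multiset.count (iota z)) h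
  simp only [Multiset.count_add, count_map_iota, iota_invol] at hz hiz
  simp only [Multiset.count_add, count_map_iota, Multiset.count_sub, Multiset.count_inter]
  omega

lemma dagg_msetprod (A : Multiset ℂ) (hA : ∀ α ∈ A, α ≠ 0) :
    dagg (Multiset.card A) ((A.map (fun α => X - Polynomial.C α)).prod)
      = Polynomial.C ((A.map (fun α => -conj α)).prod) *
        ((A.map iota).map (fun β => X - Polynomial.C β)).prod := by
  rw [Multiset.map_map]
  induction A using Multiset.induction with
  | empty => simp [dagg_one]
  | cons a s ih =>
    have ha : a ≠ 0 := hA a (Multiset.mem_cons_self a s)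
    have hs : ∀ α ∈ s, α ≠ 0 := fun α hα => hA α (Multiset.mem_cons_of_mem hα)
    simp only [Multiset.map_cons, Multiset.prod_cons, Multiset.card_cons, Function.comp]
    have hcard : Multiset.card s + 1 = 1 + Multiset.card s := by omega
    rw [hcard, dagg_mul (natDegree_X_sub_C a).le (by rw [natDegree_msetprod])]
    have ih' := ih hs
    simp only [Function.comp] at ih'
    rw [ih', dagg_lin ha, map_mul, iota_apply]
    ring

/-! ### Bridging `conv`/`conjReflect` with polynomial multiplication -/

lemma conv_coeff (k m : ℕ) (u v : ℕ → ℂ)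
    (hu : ∀ i, k < i → u i = 0) (hv : ∀ i, m < i → v i = 0) (n : ℕ) :
    conv u v n = (toPoly k u * toPoly m (fun j => conj (v j))).coeff n := by
  rw [coeff_mul, Finset.Nat.sum_antidiagonal_eq_sum_range_succ_mk, conv]
  apply Finset.sum_congr rfl
  intro i _
  rw [coeff_toPoly_of_supp k u hu,
    coeff_toPoly_of_supp m _ (fun j hj => by rw [hv j hj, map_zero])]

lemma toPoly_conjReflect (m : ℕ) (v : ℕ → ℂ) :
    toPoly m (fun j => conj (conjReflect m v j)) = dagg m (toPoly m (fun j => conj (v j))) := by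
  ext n
  rw [coeff_dagg, coeff_toPoly, coeff_toPoly]
  by_cases hn : n ≤ m
  · rw [if_pos hn, revAt_le hn, if_pos (by omega : m - n ≤ m), conjReflect, if_pos hn]
  · rw [if_neg hn, revAt_eq_self_of_lt (by omega), if_neg hn, map_zero]

lemma circle_infinite : {z : ℂ | ‖z‖ = 1}.Infinite := by
  apply Set.infinite_of_injective_forall_mem
    (f := fun n : ℕ => Complex.exp ((n : ℝ) * Complex.I))
  case hi =>
    intro a b hab
    simp only at hab
    rw [Complex.exp_eq_exp_iff_exists_int] at hab
    obtain ⟨k, hk⟩ := hab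
    have him := congrArg Complex.im hk
    push_cast at him
    simp at him
    by_cases hk0 : k = 0
    · subst hk0; simp at him; exact_mod_cast him
    · exfalso
      have hpi : Irrational Real.pi := irrational_pi
      have heq : (Real.pi : ℝ) = ((a : ℝ) - b) / (2 * k) := by
        have hk' : (k : ℝ) ≠ 0 := Int.cast_ne_zero.mpr hk0
        field_simp
        linarith [him]
      rw [heq] at hpi
      have hcast : ((((a : ℚ) - b) / (2 * k) : ℚ) : ℝ) = (((a : ℝ) - b) / (2 * (k : ℝ))) := by
        push_cast; ring
      exact hpi ⟨((a : ℚ) - b) / (2 * k), hcast⟩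
  case hf =>
    intro n
    simp only [Set.mem_setOf_eq]
    exact Complex.norm_exp_ofReal_mul_I _

lemma sq_eq_of_nonneg {a b : ℝ} (ha : 0 ≤ a) (hb : 0 ≤ b) (h : a ^ 2 = b ^ 2) : a = b := by
  apply le_antisymm <;> nlinarith

end BPaux

namespace BPaux
open Polynomial

lemma reverse_dir (N k : ℕ) (hk : k ≤ N) (x x' x₁ x₂ : ℕ → ℂ) (lam : ℂ)
    (h₁supp : ∀ i, k < i → x₁ i = 0) (h₂supp : ∀ i, N - k < i → x₂ i = 0)
    (hlam : ‖lam‖ = 1)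
    (hx : ∀ n, x n = conv x₁ x₂ n)
    (hx' : ∀ n, x' n = lam * conv x₁ (conjReflect (N - k) x₂) n)
    (ω : ℂ) (hω : ‖ω‖ = 1) :
    ‖fourierSig N x ω‖ ^ 2 = ‖fourierSig N x' ω‖ ^ 2 := by
  set m := N - k with hm
  set P₁ : ℂ[X] := toPoly k x₁ with hP₁
  set R : ℂ[X] := toPoly m (fun j => conj (x₂ j)) with hR
  have hRdeg : R.natDegree ≤ m := natDegree_toPoly_le _ _
  have hxP : toPoly N x = P₁ * R := by
    ext n
    rw [coeff_toPoly]
    by_cases hn : n ≤ N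
    · rw [if_pos hn, hx n, conv_coeff k m x₁ x₂ h₁supp h₂supp n]
    · rw [if_neg hn]
      symm
      apply coeff_eq_zero_of_natDegree_lt
      calc (P₁ * R).natDegree ≤ P₁.natDegree + R.natDegree := natDegree_mul_le
        _ ≤ k + m := add_le_add (natDegree_toPoly_le _ _) hRdeg
        _ < n := by omega
  have hrefl_supp : ∀ i, m < i → conjReflect m x₂ i = 0 := by
    intro i hi
    rw [conjReflect, if_neg (by omega)]
  have hx'P : toPoly N x' = Polynomial.C lam * (P₁ * dagg m R) := by
    ext n
    rw [coeff_toPoly]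
    by_cases hn : n ≤ N
    · rw [if_pos hn, hx' n, conv_coeff k m x₁ (conjReflect m x₂) h₁supp hrefl_supp n,
        toPoly_conjReflect m x₂, coeff_C_mul]
    · rw [if_neg hn, coeff_C_mul]
      rw [coeff_eq_zero_of_natDegree_lt, mul_zero]
      calc (P₁ * dagg m R).natDegree ≤ P₁.natDegree + (dagg m R).natDegree := natDegree_mul_le
        _ ≤ k + m := add_le_add (natDegree_toPoly_le _ _) (natDegree_dagg_le _ _ hRdeg)
        _ < n := by omega
  have e1 : fourierSig N x ω = P₁.eval ω * R.eval ω := by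
    rw [← eval_toPoly, hxP, eval_mul]
  have e2 : fourierSig N x' ω = lam * (P₁.eval ω * (ω ^ m * conj (R.eval ω))) := by
    rw [← eval_toPoly, hx'P, eval_mul, eval_C, eval_mul, eval_dagg hRdeg hω]
  rw [e1, e2]
  simp only [norm_mul, norm_pow, Complex.norm_conj]
  rw [hlam, hω]
  ring

end BPaux

namespace BPaux
open Polynomial

lemma forward_dir (N : ℕ) (x x' : ℕ → ℂ)
    (hxsupp : ∀ i, N < i → x i = 0) (hx'supp : ∀ i, N < i → x' i = 0)
    (h0 : x 0 ≠ 0) (hN : x N ≠ 0) (h0' : x' 0 ≠ 0) (hN' : x' N ≠ 0)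
    (h : ∀ ω : ℂ, ‖ω‖ = 1 →
      ‖fourierSig N x ω‖ ^ 2 = ‖fourierSig N x' ω‖ ^ 2) :
    ∃ (k : ℕ) (_ : k ≤ N) (x₁ x₂ : ℕ → ℂ) (lam : ℂ),
      (∀ i, k < i → x₁ i = 0) ∧ (∀ i, N - k < i → x₂ i = 0) ∧ ‖lam‖ = 1 ∧
      (∀ n, x n = conv x₁ x₂ n) ∧
      (∀ n, x' n = lam * conv x₁ (conjReflect (N - k) x₂) n) := by
  classical
  set P : ℂ[X] := toPoly N x with hPdef
  set Q : ℂ[X] := toPoly N x' with hQdef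
  have hPco : ∀ n, P.coeff n = x n := coeff_toPoly_of_supp N x hxsupp
  have hQco : ∀ n, Q.coeff n = x' n := coeff_toPoly_of_supp N x' hx'supp
  have hPdeg : P.natDegree = N :=
    le_antisymm (natDegree_toPoly_le _ _) (le_natDegree_of_ne_zero (by rw [hPco]; exact hN))
  have hQdeg : Q.natDegree = N :=
    le_antisymm (natDegree_toPoly_le _ _) (le_natDegree_of_ne_zero (by rw [hQco]; exact hN'))
  have hP0 : P ≠ 0 := fun hz => h0 (by rw [← hPco 0, hz, coeff_zero])
  have hQ0 : Q ≠ 0 := fun hz => h0' (by rw [← hQco 0, hz, coeff_zero])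
  have habs : ∀ ω : ℂ, ‖ω‖ = 1 → ‖P.eval ω‖ = ‖Q.eval ω‖ := by
    intro ω hω
    apply sq_eq_of_nonneg (norm_nonneg _) (norm_nonneg _)
    rw [hPdef, hQdef, eval_toPoly, eval_toPoly]
    exact h ω hω
  -- Step 1 : P·P† = Q·Q†
  have hPQ : P * dagg N P = Q * dagg N Q := by
    apply eq_of_infinite_eval_eq
    apply Set.Infinite.mono _ circle_infinite
    intro ω hω
    simp only [Set.mem_setOf_eq] at hω ⊢
    rw [eval_mul, eval_mul, eval_dagg hPdeg.le hω, eval_dagg hQdeg.le hω]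
    have eP : P.eval ω * (ω ^ N * conj (P.eval ω)) = ω ^ N * (P.eval ω * conj (P.eval ω)) := by
      ring
    have eQ : Q.eval ω * (ω ^ N * conj (Q.eval ω)) = ω ^ N * (Q.eval ω * conj (Q.eval ω)) := by
      ring
    rw [eP, eQ, Complex.mul_conj, Complex.mul_conj, Complex.normSq_eq_norm_sq,
      Complex.normSq_eq_norm_sq, habs ω hω]
  -- root multisets
  have hsplitsP : P.roots.card = P.natDegree :=
    splits_iff_card_roots.mp (IsAlgClosed.splits P)
  have hsplitsQ : Q.roots.card = Q.natDegree :=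
    splits_iff_card_roots.mp (IsAlgClosed.splits Q)
  set A := P.roots with hA
  set B := Q.roots with hB
  have cardA : Multiset.card A = N := by rw [hA, hsplitsP, hPdeg]
  have cardB : Multiset.card B = N := by rw [hB, hsplitsQ, hQdeg]
  have hAfact : Polynomial.C P.leadingCoeff * (A.map (fun α => X - Polynomial.C α)).prod = P :=
    C_leadingCoeff_mul_prod_multiset_X_sub_C hsplitsP
  have hBfact : Polynomial.C Q.leadingCoeff * (B.map (fun α => X - Polynomial.C α)).prod = Q :=
    C_leadingCoeff_mul_prod_multiset_X_sub_C hsplitsQ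
  set a := P.leadingCoeff with ha
  set b := Q.leadingCoeff with hb
  have ha0 : a ≠ 0 := leadingCoeff_ne_zero.mpr hP0
  have hb0 : b ≠ 0 := leadingCoeff_ne_zero.mpr hQ0
  have h0A : ∀ α ∈ A, α ≠ 0 := by
    intro α hα hz
    subst hz
    have hr : P.IsRoot 0 := (mem_roots hP0).mp hα
    exact h0 (by rw [← hPco 0, coeff_zero_eq_eval_zero]; exact hr)
  have h0B : ∀ α ∈ B, α ≠ 0 := by
    intro α hα hz
    subst hz
    have hr : Q.IsRoot 0 := (mem_roots hQ0).mp hα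
    exact h0' (by rw [← hQco 0, coeff_zero_eq_eval_zero]; exact hr)
  -- nonzero products
  have hprodA : (A.map (fun α => -conj α)).prod ≠ 0 := by
    apply Multiset.prod_ne_zero
    intro hmem
    obtain ⟨α, hα, heq⟩ := Multiset.mem_map.mp hmem
    exact h0A α hα (by simpa using heq.symm)
  -- dagger factorizations
  have hdaggP : dagg N P
      = Polynomial.C (conj a * (A.map (fun α => -conj α)).prod) *
        ((A.map iota).map (fun β => X - Polynomial.C β)).prod := by
    conv_lhs => rw [← hAfact, dagg_C_mul]
    have hm := dagg_msetprod A h0A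
    rw [cardA] at hm
    rw [hm, ← mul_assoc, ← map_mul]
  have hcA : conj a * (A.map (fun α => -conj α)).prod ≠ 0 :=
    mul_ne_zero (by simpa using ha0) hprodA
  have hPdagg0 : dagg N P ≠ 0 := by
    rw [hdaggP]
    exact mul_ne_zero (Polynomial.C_ne_zero.mpr hcA) (monic_msetprod _).ne_zero
  have hrootsdaggP : (dagg N P).roots = A.map iota := by
    rw [hdaggP, roots_C_mul _ hcA, roots_multiset_prod_X_sub_C]
  have hprodB : (B.map (fun α => -conj α)).prod ≠ 0 := by
    apply Multiset.prod_ne_zero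
    intro hmem
    obtain ⟨α, hα, heq⟩ := Multiset.mem_map.mp hmem
    exact h0B α hα (by simpa using heq.symm)
  have hdaggQ : dagg N Q
      = Polynomial.C (conj b * (B.map (fun α => -conj α)).prod) *
        ((B.map iota).map (fun β => X - Polynomial.C β)).prod := by
    conv_lhs => rw [← hBfact, dagg_C_mul]
    have hm := dagg_msetprod B h0B
    rw [cardB] at hm
    rw [hm, ← mul_assoc, ← map_mul]
  have hcB : conj b * (B.map (fun α => -conj α)).prod ≠ 0 :=
    mul_ne_zero (by simpa using hb0) hprodB
  have hQdagg0 : dagg N Q ≠ 0 := by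
    rw [hdaggQ]
    exact mul_ne_zero (Polynomial.C_ne_zero.mpr hcB) (monic_msetprod _).ne_zero
  have hrootsdaggQ : (dagg N Q).roots = B.map iota := by
    rw [hdaggQ, roots_C_mul _ hcB, roots_multiset_prod_X_sub_C]
  -- the root identity
  have hroots : A + A.map iota = B + B.map iota := by
    have h1 := congrArg Polynomial.roots hPQ
    rwa [roots_mul (mul_ne_zero hP0 hPdagg0), roots_mul (mul_ne_zero hQ0 hQdagg0),
      hrootsdaggP, hrootsdaggQ, ← hA, ← hB] at h1
  -- decompose
  set A₁ := A ∩ B with hA₁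
  set A₂ := A - A₁ with hA₂
  have hA₁le : A₁ ≤ A := Multiset.inter_le_left
  have hAsum : A₁ + A₂ = A := by
    rw [hA₂, add_comm]
    exact tsub_add_cancel_of_le hA₁le
  have hBsum : B = A₁ + A₂.map iota := multiset_decomp A B hroots
  set k := Multiset.card A₁ with hk
  have hkN : k ≤ N := by
    rw [hk, ← cardA]
    exact Multiset.card_le_card hA₁le
  have hcardA₂ : Multiset.card A₂ = N - k := by
    have := congrArg Multiset.card hAsum
    simp only [Multiset.card_add] at this
    omega
  have h0A₂ : ∀ α ∈ A₂, α ≠ 0 := fun α hα => h0A α (Multiset.subset_of_le (Multiset.sub_le_self _ _) hα)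
  -- the factors
  set P₁ : ℂ[X] := (A₁.map (fun α => X - Polynomial.C α)).prod with hP₁
  set P₂ : ℂ[X] := Polynomial.C a * (A₂.map (fun α => X - Polynomial.C α)).prod with hP₂
  have hdegP₁ : P₁.natDegree = k := natDegree_msetprod A₁
  have hdegP₂ : P₂.natDegree = N - k := by
    rw [hP₂, natDegree_C_mul ha0, natDegree_msetprod, hcardA₂]
  have hPfact : P = P₁ * P₂ := by
    conv_lhs => rw [← hAfact]
    rw [← hAsum, Multiset.map_add, Multiset.prod_add, hP₁, hP₂]
    ring
  -- dagger of P₂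
  set c₂ := (A₂.map (fun α => -conj α)).prod with hc₂def
  have hc₂0 : c₂ ≠ 0 := by
    apply Multiset.prod_ne_zero
    intro hmem
    obtain ⟨α, hα, heq⟩ := Multiset.mem_map.mp hmem
    exact h0A₂ α hα (by simpa using heq.symm)
  have hdaggP₂ : dagg (N - k) P₂
      = Polynomial.C (conj a * c₂) * ((A₂.map iota).map (fun β => X - Polynomial.C β)).prod := by
    rw [hP₂, dagg_C_mul]
    have hm := dagg_msetprod A₂ h0A₂
    rw [hcardA₂] at hm
    rw [hm, ← mul_assoc, ← map_mul]
  -- Q in terms of P₁ and dagg P₂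
  set μ := b * (conj a * c₂)⁻¹ with hμ
  have hac₂ : conj a * c₂ ≠ 0 := mul_ne_zero (by simpa using ha0) hc₂0
  have hQfact2 : Q = Polynomial.C μ * (P₁ * dagg (N - k) P₂) := by
    rw [hdaggP₂]
    have hCμ : Polynomial.C μ * Polynomial.C (conj a * c₂) = Polynomial.C b := by
      rw [← map_mul]
      congr 1
      rw [hμ]
      exact inv_mul_cancel_right₀ hac₂ b
    calc Q = Polynomial.C b * (B.map (fun α => X - Polynomial.C α)).prod := hBfact.symm
      _ = Polynomial.C b *
            (P₁ * ((A₂.map iota).map (fun β => X - Polynomial.C β)).prod) := by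
          rw [hBsum, Multiset.map_add, Multiset.prod_add, hP₁]
      _ = (Polynomial.C μ * Polynomial.C (conj a * c₂)) *
            (P₁ * ((A₂.map iota).map (fun β => X - Polynomial.C β)).prod) := by rw [hCμ]
      _ = Polynomial.C μ * (P₁ * (Polynomial.C (conj a * c₂) *
            ((A₂.map iota).map (fun β => X - Polynomial.C β)).prod)) := by ring
  -- μ is unimodular
  have hμ1 : ‖μ‖ = 1 := by
    have hinf : ({z : ℂ | ‖z‖ = 1} \ {z : ℂ | P.IsRoot z}).Infinite :=
      circle_infinite.diff (finite_setOf_isRoot hP0)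
    obtain ⟨ω, hω⟩ := hinf.nonempty
    obtain ⟨hω1, hωP⟩ := hω
    simp only [Set.mem_setOf_eq] at hω1 hωP
    have hPω : ‖P.eval ω‖ ≠ 0 := by
      simpa [norm_eq_zero] using hωP
    have heq : ‖Q.eval ω‖ = ‖μ‖ * ‖P.eval ω‖ := by
      rw [hQfact2, hPfact]
      rw [eval_mul, eval_mul, eval_C, eval_mul, eval_dagg hdegP₂.le hω1]
      simp only [norm_mul, norm_pow, Complex.norm_conj]
      rw [hω1]
      ring
    have habsω := habs ω hω1
    rw [heq] at habsω
    have hcanc : ‖μ‖ * ‖P.eval ω‖ = 1 * ‖P.eval ω‖ := by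
      rw [← habsω]; ring
    simpa using mul_right_cancel₀ hPω hcanc
  -- witnesses
  refine ⟨k, hkN, fun n => P₁.coeff n, fun n => conj (P₂.coeff n), μ, ?_, ?_, hμ1, ?_, ?_⟩
  · intro i hi
    exact coeff_eq_zero_of_natDegree_lt (by omega)
  · intro i hi
    show conj (P₂.coeff i) = 0
    rw [coeff_eq_zero_of_natDegree_lt (by omega), map_zero]
  · intro n
    have hsupp₁ : ∀ i, k < i → P₁.coeff i = 0 :=
      fun i hi => coeff_eq_zero_of_natDegree_lt (by omega)
    have hsupp₂ : ∀ i, N - k < i → conj (P₂.coeff i) = 0 :=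
      fun i hi => by rw [coeff_eq_zero_of_natDegree_lt (by omega), map_zero]
    rw [conv_coeff k (N - k) _ _ hsupp₁ hsupp₂ n]
    have h₁ : toPoly k (fun n => P₁.coeff n) = P₁ := toPoly_coeff_self k P₁ hdegP₁.le
    have h₂ : toPoly (N - k) (fun j => conj (conj (P₂.coeff j))) = P₂ := by
      have : (fun j => conj (conj (P₂.coeff j))) = fun j => P₂.coeff j := by
        funext j; simp
      rw [this]
      exact toPoly_coeff_self _ P₂ hdegP₂.le
    rw [h₁, h₂, ← hPfact, hPco]
  · intro n
    have hsupp₁ : ∀ i, k < i → P₁.coeff i = 0 :=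
      fun i hi => coeff_eq_zero_of_natDegree_lt (by omega)
    have hsupp₂ : ∀ i, N - k < i → conjReflect (N - k) (fun n => conj (P₂.coeff n)) i = 0 :=
      fun i hi => by rw [conjReflect, if_neg (by omega)]
    rw [conv_coeff k (N - k) _ _ hsupp₁ hsupp₂ n]
    rw [toPoly_conjReflect (N - k) (fun n => conj (P₂.coeff n))]
    have h₁ : toPoly k (fun n => P₁.coeff n) = P₁ := toPoly_coeff_self k P₁ hdegP₁.le
    have h₂ : toPoly (N - k) (fun j => conj (conj (P₂.coeff j))) = P₂ := by
      have : (fun j => conj (conj (P₂.coeff j))) = fun j => P₂.coeff j := by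
        funext j; simp
      rw [this]
      exact toPoly_coeff_self _ P₂ hdegP₂.le
    rw [h₁, h₂, ← hQco n, hQfact2, coeff_C_mul]

end BPaux


/-- Beinert–Plonka characterization: two full-support signals of length `N+1` have
the same Fourier intensity function iff `x = x₁ ⋆ x₂` and `x' = λ (x₁ ⋆ ẋ₂)` for
some factorization with `x₁ ∈ ℂ^{k+1}`, `x₂ ∈ ℂ^{N-k+1}` and unimodular `λ`. -/
theorem beinert_plonka_characterization (N : ℕ) (x x' : ℕ → ℂ)
    (hxsupp : ∀ i, N < i → x i = 0) (hx'supp : ∀ i, N < i → x' i = 0)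
    (h0 : x 0 ≠ 0) (hN : x N ≠ 0) (h0' : x' 0 ≠ 0) (hN' : x' N ≠ 0) :
    (∀ ω : ℂ, ‖ω‖ = 1 →
        ‖fourierSig N x ω‖ ^ 2 = ‖fourierSig N x' ω‖ ^ 2) ↔
      ∃ (k : ℕ) (_ : k ≤ N) (x₁ x₂ : ℕ → ℂ) (lam : ℂ),
        (∀ i, k < i → x₁ i = 0) ∧ (∀ i, N - k < i → x₂ i = 0) ∧ ‖lam‖ = 1 ∧
        (∀ n, x n = conv x₁ x₂ n) ∧
        (∀ n, x' n = lam * conv x₁ (conjReflect (N - k) x₂) n) := by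
  constructor
  · intro h
    exact BPaux.forward_dir N x x' hxsupp hx'supp h0 hN h0' hN' h
  · rintro ⟨k, hk, x₁, x₂, lam, h₁supp, h₂supp, hlam, hx, hx'⟩ ω hω
    exact BPaux.reverse_dir N k hk x x' x₁ x₂ lam h₁supp h₂supp hlam hx hx' ω hω
end

section
/- The action of the group G = S¹ ⋉ (μ₂^N ⋊ S_N) on ℂ* × (ℂ*)^N defined by: λ ∈ S¹ scaling a₀, τ ∈ S_N permuting (β₁,…,β_N), and the i-th generator sᵢ of μ₂^N sending (a₀, β₁,…,β_N) to (a₀|βᵢ|, β₁,…,conj(βᵢ)⁻¹,…,β_N), is a well-defined group action (in particular each sᵢ is an involution and τ∘sᵢ = s_{τ(i)}∘τ), and every element of G preserves the Fourier intensity function of the associated signal a₀∏(ω - βᵢ). -/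
open ComplexConjugate

/-- The scaling part of the root ambiguity group: `λ` acts on `(a₀, β)` by scaling `a₀`. -/
noncomputable def scaleAct {N : ℕ} (lam : ℂ) (p : ℂ × (Fin N → ℂ)) : ℂ × (Fin N → ℂ) :=
  (lam * p.1, p.2)

/-- The permutation part of the root ambiguity group: `τ` permutes the roots. -/
noncomputable def permAct {N : ℕ} (τ : Equiv.Perm (Fin N)) (p : ℂ × (Fin N → ℂ)) :
    ℂ × (Fin N → ℂ) :=
  (p.1, p.2 ∘ τ)

/-- The `i`-th reflection generator `sᵢ` of `μ₂^N`: it replaces `βᵢ` by `conj(βᵢ)⁻¹`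
and rescales the leading coefficient by `|βᵢ|`. -/
noncomputable def reflAct {N : ℕ} (i : Fin N) (p : ℂ × (Fin N → ℂ)) : ℂ × (Fin N → ℂ) :=
  (p.1 * ((‖p.2 i‖ : ℝ) : ℂ), Function.update p.2 i ((conj (p.2 i))⁻¹))

/-- The Fourier intensity function of the signal associated to a point of the root
cover: `ω ↦ |a₀ ∏ (ω - βᵢ)|²`. -/
noncomputable def rootIntensity {N : ℕ} (p : ℂ × (Fin N → ℂ)) (ω : ℂ) : ℝ :=
  ‖p.1 * ∏ i, (ω - p.2 i)‖ ^ 2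


open ComplexConjugate

lemma key_refl (β ω : ℂ) (hβ : β ≠ 0) (hω : ‖ω‖ = 1) :
    ‖β‖ * ‖ω - (conj β)⁻¹‖ = ‖ω - β‖ := by
  have hcβ : conj β ≠ 0 := by simpa using hβ
  have habsω : ‖ω‖ = 1 := hω
  calc ‖β‖ * ‖ω - (conj β)⁻¹‖
      = ‖conj β‖ * ‖ω - (conj β)⁻¹‖ := by
        rw [Complex.norm_conj]
    _ = ‖conj β * (ω - (conj β)⁻¹)‖ := (norm_mul _ _).symm
    _ = ‖conj β * ω - 1‖ := by
        rw [mul_sub, mul_inv_cancel₀ hcβ]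
    _ = ‖conj (conj β * ω - 1)‖ := (Complex.norm_conj _).symm
    _ = ‖conj ω * (β - ω)‖ := by
        congr 1
        have : conj ω * ω = 1 := by
          rw [← Complex.normSq_eq_conj_mul_self]
          simp [Complex.normSq_eq_norm_sq, habsω]
        simp only [map_sub, map_mul, Complex.conj_conj, map_one, mul_sub]
        rw [this]
        ring
    _ = ‖β - ω‖ := by
        rw [norm_mul, Complex.norm_conj, habsω, one_mul]
    _ = ‖ω - β‖ := by exact norm_sub_rev _ _

/-- The action of the root ambiguity group `G = S¹ ⋉ (μ₂^N ⋊ S_N)` on the root cover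
is well defined — each `sᵢ` is an involution and `τ ∘ s_{τ(j)} = s_j ∘ τ` — and each
of the generators (unimodular scaling, permutation of roots, reflection of a root)
preserves the Fourier intensity function of the associated signal. -/
theorem root_ambiguity_group_action (N : ℕ) :
    (∀ (i : Fin N) (p : ℂ × (Fin N → ℂ)), (∀ j, p.2 j ≠ 0) →
      reflAct i (reflAct i p) = p) ∧
    (∀ (τ : Equiv.Perm (Fin N)) (j : Fin N) (p : ℂ × (Fin N → ℂ)),
      permAct τ (reflAct (τ j) p) = reflAct j (permAct τ p)) ∧
    (∀ (lam : ℂ), ‖lam‖ = 1 → ∀ (p : ℂ × (Fin N → ℂ)) (ω : ℂ), ‖ω‖ = 1 →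
      rootIntensity (scaleAct lam p) ω = rootIntensity p ω) ∧
    (∀ (τ : Equiv.Perm (Fin N)) (p : ℂ × (Fin N → ℂ)) (ω : ℂ), ‖ω‖ = 1 →
      rootIntensity (permAct τ p) ω = rootIntensity p ω) ∧
    (∀ (i : Fin N) (p : ℂ × (Fin N → ℂ)), (∀ j, p.2 j ≠ 0) → ∀ ω : ℂ, ‖ω‖ = 1 →
      rootIntensity (reflAct i p) ω = rootIntensity p ω) := by
  refine ⟨?_, ?_, ?_, ?_, ?_⟩
  · intro i p hp
    have hβ := hp i
    have hcβ : conj (p.2 i) ≠ 0 := by simpa using hβ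
    simp only [reflAct, Function.update_self]
    refine Prod.ext ?_ ?_
    · have habs : (‖p.2 i‖ : ℂ) ≠ 0 := by
        exact_mod_cast norm_ne_zero_iff.mpr hβ
      simp only [norm_inv, Complex.norm_conj]
      push_cast
      field_simp
    · simp only [Function.update_idem, map_inv₀, inv_inv, Complex.conj_conj]
      exact Function.update_eq_self _ _
  · intro τ j p
    refine Prod.ext rfl ?_
    simp only [permAct, reflAct, Function.comp_apply]
    simpa using Function.update_comp_equiv p.2 τ (τ j) ((conj (p.2 (τ j)))⁻¹)
  · intro lam hlam p ω hω
    have : ‖lam‖ = 1 := hlam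
    simp [rootIntensity, scaleAct, norm_mul, this]
  · intro τ p ω hω
    simp only [rootIntensity, permAct, Function.comp_apply]
    rw [← Equiv.prod_comp τ (fun i => (ω - p.2 i))]
  · intro i p hp ω hω
    have hβ := hp i
    simp only [rootIntensity, reflAct, norm_mul, Complex.norm_real, abs_abs,
      norm_norm]
    congr 1
    have hupd : (fun x => ω - Function.update p.2 i ((conj (p.2 i))⁻¹) x)
        = Function.update (fun x => ω - p.2 x) i (ω - (conj (p.2 i))⁻¹) := by
      funext x; by_cases h : x = i <;> simp [Function.update_apply, h]
    calc ‖p.1‖ * ‖p.2 i‖ *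
          ‖∏ x, (ω - Function.update p.2 i ((conj (p.2 i))⁻¹) x)‖
        = ‖p.1‖ * ‖p.2 i‖ *
          ‖(ω - (conj (p.2 i))⁻¹) * ∏ x ∈ (Finset.univ \ {i}), (ω - p.2 x)‖ := by
          rw [show (∏ x, (ω - Function.update p.2 i ((conj (p.2 i))⁻¹) x))
              = ∏ x, Function.update (fun x => ω - p.2 x) i (ω - (conj (p.2 i))⁻¹) x from by
                rw [← hupd],
            Finset.prod_update_of_mem (Finset.mem_univ i)]
      _ = ‖p.1‖ * ((‖p.2 i‖ * ‖ω - (conj (p.2 i))⁻¹‖) *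
            ‖∏ x ∈ (Finset.univ \ {i}), (ω - p.2 x)‖) := by
          rw [norm_mul]; ring
      _ = ‖p.1‖ * (‖ω - p.2 i‖ *
            ‖∏ x ∈ (Finset.univ \ {i}), (ω - p.2 x)‖) := by
          rw [key_refl _ _ hβ hω]
      _ = ‖p.1‖ * ‖∏ x, (ω - p.2 x)‖ := by
          rw [← norm_mul]
          congr 1
          rw [← Finset.erase_eq]
          rw [Finset.mul_prod_erase Finset.univ (fun x => ω - p.2 x) (Finset.mem_univ i)]
end
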